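/- Let H be an n×n real symmetric matrix, let v ∈ ℝⁿ be a unit vector with Hv = λv for some real λ, let t₀ be a real number, and let ε > 0. Then ‖exp(i(t₀H + ε·vvᵀ)) − exp(i t₀ H)‖ = |e^{iε} − 1|, where ‖·‖ is the operator (spectral) norm. Consequently, since ‖ε·vvᵀ‖ = ε, the ratio ‖exp(i(t₀H + ε·vvᵀ)) − exp(i t₀ H)‖ / (ε e^{ε}) tends to 1 as ε → 0⁺, so the general estimate ‖exp(i(t₀H + H₀)) − exp(i t₀ H)‖ ≤ ‖H₀‖e^{‖H₀‖} is asymptotically sharp. -/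

import Mathlib

open Matrix
open scoped Matrix.Norms.L2Operator

lemma aux_pow_mulVec {n : ℕ} (M : Matrix (Fin n) (Fin n) ℂ) (w : Fin n → ℂ) (μ : ℂ)
    (h : M.mulVec w = μ • w) : ∀ k : ℕ, (M ^ k).mulVec w = μ ^ k • w := by
  intro k
  induction k with
  | zero => simp
  | succ k ih =>
    rw [pow_succ', ← Matrix.mulVec_mulVec, ih, Matrix.mulVec_smul, h, smul_smul, ← pow_succ]

lemma aux_scalar_summable (μ : ℂ) : Summable (fun k : ℕ => (k.factorial : ℂ)⁻¹ * μ ^ k) := by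
  simpa [smul_eq_mul] using NormedSpace.expSeries_summable' (𝕂 := ℂ) μ

lemma aux_scalar_tsum (μ : ℂ) : ∑' k : ℕ, (k.factorial : ℂ)⁻¹ * μ ^ k = Complex.exp μ := by
  rw [Complex.exp_eq_exp_ℂ, NormedSpace.exp_eq_tsum (𝕂 := ℂ)]
  simp [smul_eq_mul]

lemma aux_exp_mulVec {n : ℕ} (M : Matrix (Fin n) (Fin n) ℂ) (w : Fin n → ℂ) (μ : ℂ)
    (h : M.mulVec w = μ • w) :
    (NormedSpace.exp M).mulVec w = Complex.exp μ • w := by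
  classical
  have hsum := NormedSpace.expSeries_summable' (𝕂 := ℂ) M
  have hlin : IsLinearMap ℂ (fun A : Matrix (Fin n) (Fin n) ℂ => A.mulVec w) :=
    ⟨fun A B => Matrix.add_mulVec A B w, fun c A => Matrix.smul_mulVec c A w⟩
  let f : Matrix (Fin n) (Fin n) ℂ →L[ℂ] (Fin n → ℂ) := (hlin.mk' _).toContinuousLinearMap
  have key : (NormedSpace.exp M).mulVec w
      = ∑' k : ℕ, ((k.factorial : ℂ)⁻¹ • M ^ k).mulVec w := by
    have h1 : (NormedSpace.exp M).mulVec w = f (NormedSpace.exp M) := rfl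
    rw [h1, NormedSpace.exp_eq_tsum (𝕂 := ℂ), ContinuousLinearMap.map_tsum f hsum]
    rfl
  rw [key]
  have h2 : ∀ k : ℕ, ((k.factorial : ℂ)⁻¹ • M ^ k).mulVec w
      = ((k.factorial : ℂ)⁻¹ * μ ^ k) • w := by
    intro k
    rw [Matrix.smul_mulVec, aux_pow_mulVec M w μ h k, smul_smul]
  simp_rw [h2]
  rw [Summable.tsum_smul_const (aux_scalar_summable μ), aux_scalar_tsum]

lemma aux_exp_idem {n : ℕ} (P : Matrix (Fin n) (Fin n) ℂ) (hP : P * P = P) (c : ℂ) :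
    NormedSpace.exp (c • P) = 1 + (Complex.exp c - 1) • P := by
  have hpow : ∀ k : ℕ, P ^ (k + 1) = P := by
    intro k
    induction k with
    | zero => simp
    | succ k ih => rw [pow_succ, ih, hP]
  have hsum := NormedSpace.expSeries_summable' (𝕂 := ℂ) (c • P)
  rw [NormedSpace.exp_eq_tsum (𝕂 := ℂ)]
  have hterm : ∀ k : ℕ, ((k + 1).factorial : ℂ)⁻¹ • (c • P) ^ (k + 1)
      = (((k + 1).factorial : ℂ)⁻¹ * c ^ (k + 1)) • P := by
    intro k
    rw [smul_pow, hpow, smul_smul]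
  show ∑' k : ℕ, ((k.factorial : ℂ)⁻¹ • (c • P) ^ k) = _
  rw [Summable.tsum_eq_zero_add hsum]
  simp only [pow_zero, Nat.factorial_zero, Nat.cast_one, inv_one, one_smul, hterm]
  congr 1
  have hs2 : Summable (fun k : ℕ => ((k + 1).factorial : ℂ)⁻¹ * c ^ (k + 1)) :=
    (aux_scalar_summable c).comp_injective (add_left_injective 1) |>.congr (by simp)
  rw [Summable.tsum_smul_const hs2]
  congr 1
  have := aux_scalar_tsum c
  rw [Summable.tsum_eq_zero_add (aux_scalar_summable c)] at this
  simp at this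
  linear_combination this

lemma aux_norm_vecMulVec {𝕜 : Type*} [RCLike 𝕜] {n : ℕ} (u : Fin n → 𝕜)
    (hreal : ∀ i, star (u i) = u i) (hu : u ⬝ᵥ u = 1) :
    ‖vecMulVec u u‖ = 1 := by
  classical
  set P := vecMulVec u u with hPdef
  have hsum : ∑ k, u k * u k = 1 := hu
  have hP : P * P = P := by
    ext i j
    simp only [hPdef, Matrix.mul_apply, Matrix.vecMulVec_apply]
    calc ∑ k, u i * u k * (u k * u j) = ∑ k, (u i * u j) * (u k * u k) := by
          apply Finset.sum_congr rfl; intros; ring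
      _ = (u i * u j) * ∑ k, u k * u k := by rw [Finset.mul_sum]
      _ = u i * u j := by rw [hsum, mul_one]
  have hH : Pᴴ = P := by
    ext i j
    simp only [hPdef, Matrix.conjTranspose_apply, Matrix.vecMulVec_apply, StarMul.star_mul]
    rw [hreal, hreal, mul_comm]
  have hcstar : ‖P‖ * ‖P‖ = ‖P‖ := by
    rw [← Matrix.l2_opNorm_conjTranspose_mul_self, hH, hP]
  have hPu : P.mulVec u = u := by
    ext i
    simp only [hPdef, Matrix.mulVec, dotProduct, Matrix.vecMulVec_apply]
    calc ∑ k, u i * u k * u k = u i * ∑ k, u k * u k := by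
          rw [Finset.mul_sum]; apply Finset.sum_congr rfl; intros; ring
      _ = u i := by rw [hsum, mul_one]
  have hsq : ∀ i, (‖u i‖ ^ 2 : ℝ) = RCLike.re (u i * u i) := by
    intro i
    have h := RCLike.mul_conj (u i)
    have h2 : u i * u i = ((‖u i‖ ^ 2 : ℝ) : 𝕜) := by
      push_cast
      rw [← h]; congr 1; exact (hreal i).symm
    rw [h2, RCLike.ofReal_re]
  have hnu : ‖(EuclideanSpace.equiv (Fin n) 𝕜).symm u‖ = 1 := by
    rw [EuclideanSpace.norm_eq]
    have h2 : ∑ i, ‖u i‖ ^ 2 = 1 := by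
      simp_rw [hsq, ← map_sum, hsum]; simp
    have h3 : ∀ i, ‖(EuclideanSpace.equiv (Fin n) 𝕜).symm u i‖ = ‖u i‖ := fun _ => rfl
    simp_rw [h3, h2, Real.sqrt_one]
  have hge : (1 : ℝ) ≤ ‖P‖ := by
    have h := Matrix.l2_opNorm_mulVec P ((EuclideanSpace.equiv (Fin n) 𝕜).symm u)
    have h4 : (P *ᵥ ((EuclideanSpace.equiv (Fin n) 𝕜).symm u : Fin n → 𝕜)) = u := hPu
    rw [h4, hnu, mul_one] at h
    exact h
  nlinarith [hcstar, hge]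

lemma aux_mul_vecMulVec {n : ℕ} {α : Type*} [CommRing α] (A : Matrix (Fin n) (Fin n) α)
    (a b : Fin n → α) : A * vecMulVec a b = vecMulVec (A.mulVec a) b := by
  ext i j
  simp only [Matrix.mul_apply, Matrix.vecMulVec_apply, Matrix.mulVec, dotProduct,
    Finset.sum_mul]
  apply Finset.sum_congr rfl; intros; ring

lemma aux_vecMulVec_mul {n : ℕ} {α : Type*} [CommRing α] (A : Matrix (Fin n) (Fin n) α)
    (a b : Fin n → α) : vecMulVec a b * A = vecMulVec a (Aᵀ.mulVec b) := by
  ext i j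
  simp only [Matrix.mul_apply, Matrix.vecMulVec_apply, Matrix.mulVec, dotProduct,
    Matrix.transpose_apply, Finset.mul_sum]
  apply Finset.sum_congr rfl; intros; ring

lemma aux_smul_vecMulVec {n : ℕ} {α : Type*} [CommRing α] (c : α) (a b : Fin n → α) :
    vecMulVec (c • a) b = c • vecMulVec a b := by
  ext i j
  simp [Matrix.vecMulVec_apply, mul_assoc]

lemma aux_vecMulVec_smul {n : ℕ} {α : Type*} [CommRing α] (c : α) (a b : Fin n → α) :
    vecMulVec a (c • b) = c • vecMulVec a b := by
  ext i j
  simp [Matrix.vecMulVec_apply]; ring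

lemma aux_vecMulVec_mulVec {n : ℕ} {α : Type*} [CommRing α] (a b w : Fin n → α) :
    (vecMulVec a b).mulVec w = (b ⬝ᵥ w) • a := by
  ext i
  simp only [Matrix.mulVec, dotProduct, Matrix.vecMulVec_apply, Pi.smul_apply,
    smul_eq_mul]
  rw [Finset.sum_mul]
  apply Finset.sum_congr rfl; intros; ring

/-- Sharpness of the exponential perturbation bound: perturbing by `ε vvᵀ` for a unit
eigenvector `v` of `H` gives `‖exp(i(t₀H + ε vvᵀ)) - exp(i t₀H)‖ = |e^{iε} - 1|`,
`‖ε vvᵀ‖ = ε`, and the ratio to the general bound `‖H₀‖e^{‖H₀‖}` tends to `1` as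
`ε → 0⁺`. -/
theorem stmt16 {n : ℕ} (H : Matrix (Fin n) (Fin n) ℝ) (hH : H.IsSymm)
    (v : Fin n → ℝ) (hv : v ⬝ᵥ v = 1) (lam : ℝ) (heig : H.mulVec v = lam • v)
    (t₀ : ℝ) (ε : ℝ) (hε : 0 < ε) :
    ‖NormedSpace.exp (Complex.I •
          (t₀ • H + ε • Matrix.vecMulVec v v).map (fun x => (x : ℂ)))
        - NormedSpace.exp (Complex.I • (t₀ • H).map (fun x => (x : ℂ)))‖
      = ‖Complex.exp (Complex.I * (ε : ℂ)) - 1‖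
    ∧ ‖ε • Matrix.vecMulVec v v‖ = ε
    ∧ Filter.Tendsto (fun e : ℝ =>
        ‖NormedSpace.exp (Complex.I •
              (t₀ • H + e • Matrix.vecMulVec v v).map (fun x => (x : ℂ)))
            - NormedSpace.exp (Complex.I • (t₀ • H).map (fun x => (x : ℂ)))‖
          / (e * Real.exp e))
        (nhdsWithin 0 (Set.Ioi 0)) (nhds 1) := by
  classical
  set u : Fin n → ℂ := fun i => (v i : ℂ) with hu_def
  set Pc : Matrix (Fin n) (Fin n) ℂ := vecMulVec u u with hPc_def
  set Ac : Matrix (Fin n) (Fin n) ℂ := (t₀ • H).map (fun x => (x : ℂ)) with hAc_def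
  have hu_dot : u ⬝ᵥ u = 1 := by
    simp only [dotProduct, hu_def, ← Complex.ofReal_mul, ← Complex.ofReal_sum]
    rw [show ∑ i, v i * v i = 1 from hv]
    simp
  have hu_real : ∀ i, star (u i) = u i := by
    intro i; simp [hu_def]
  have hPP : Pc * Pc = Pc := by
    rw [hPc_def, aux_mul_vecMulVec, aux_vecMulVec_mulVec, hu_dot, one_smul]
  have hAcu : Ac.mulVec u = ((t₀ : ℂ) * (lam : ℂ)) • u := by
    ext i
    have h1 : (H.mulVec v) i = lam * v i := by rw [heig]; rfl
    have h2 : ∑ k, H i k * v k = lam * v i := by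
      simpa [Matrix.mulVec, dotProduct] using h1
    simp only [hAc_def, Matrix.mulVec, dotProduct, Matrix.map_apply, Matrix.smul_apply,
      smul_eq_mul, hu_def, Pi.smul_apply]
    push_cast
    calc ∑ k, (t₀ : ℂ) * (H i k : ℂ) * (v k : ℂ)
        = (t₀ : ℂ) * ∑ k, ((H i k * v k : ℝ) : ℂ) := by
          rw [Finset.mul_sum]; apply Finset.sum_congr rfl; intros; push_cast; ring
      _ = (t₀ : ℂ) * (((lam * v i : ℝ)) : ℂ) := by rw [← Complex.ofReal_sum, h2]
      _ = (t₀ : ℂ) * (lam : ℂ) * (v i : ℂ) := by push_cast; ring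
  have hAcT : Acᵀ = Ac := by
    ext i j
    simp only [hAc_def, Matrix.transpose_apply, Matrix.map_apply, Matrix.smul_apply,
      smul_eq_mul]
    rw [hH.apply]
  have hAcPc : Ac * Pc = Pc * Ac := by
    rw [hPc_def, aux_mul_vecMulVec, aux_vecMulVec_mul, hAcT, hAcu, aux_smul_vecMulVec,
      aux_vecMulVec_smul]
  -- the main formula, valid for every e
  have main : ∀ e : ℝ,
      NormedSpace.exp (Complex.I • (t₀ • H + e • Matrix.vecMulVec v v).map (fun x => (x : ℂ)))
        - NormedSpace.exp (Complex.I • (t₀ • H).map (fun x => (x : ℂ)))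
      = ((Complex.exp (Complex.I * (e : ℂ)) - 1)
          * Complex.exp (Complex.I * ((t₀ : ℂ) * (lam : ℂ)))) • Pc := by
    intro e
    have hmap : (t₀ • H + e • Matrix.vecMulVec v v).map (fun x => (x : ℂ))
        = Ac + (e : ℂ) • Pc := by
      ext i j
      simp only [Matrix.map_apply, Matrix.add_apply, Matrix.smul_apply, smul_eq_mul,
        Matrix.vecMulVec_apply, hAc_def, hPc_def, hu_def]
      push_cast
      ring
    have hcomm : Commute (Complex.I • Ac) ((Complex.I * (e : ℂ)) • Pc) := by
      unfold Commute SemiconjBy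
      rw [Algebra.mul_smul_comm, Algebra.smul_mul_assoc, Algebra.mul_smul_comm,
        Algebra.smul_mul_assoc, hAcPc]
      rw [smul_comm]
    have hexpAc_mul : NormedSpace.exp (Complex.I • Ac) * Pc
        = Complex.exp (Complex.I * ((t₀ : ℂ) * (lam : ℂ))) • Pc := by
      have hmv : (Complex.I • Ac).mulVec u
          = (Complex.I * ((t₀ : ℂ) * (lam : ℂ))) • u := by
        rw [Matrix.smul_mulVec, hAcu, smul_smul]
      rw [hPc_def, aux_mul_vecMulVec, aux_exp_mulVec _ u _ hmv, aux_smul_vecMulVec]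
    rw [hmap, smul_add, smul_smul,
      Matrix.exp_add_of_commute _ _ hcomm, aux_exp_idem Pc hPP, mul_add, mul_one,
      mul_smul_comm, hexpAc_mul, ← hAc_def, add_sub_cancel_left, smul_smul]
  have hnormPc : ‖Pc‖ = 1 := aux_norm_vecMulVec u hu_real hu_dot
  have habs2 : ‖Complex.exp (Complex.I * ((t₀ : ℂ) * (lam : ℂ)))‖ = 1 := by
    rw [Complex.norm_exp]
    simp
  have hnorm : ∀ e : ℝ,
      ‖NormedSpace.exp (Complex.I •
          (t₀ • H + e • Matrix.vecMulVec v v).map (fun x => (x : ℂ)))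
        - NormedSpace.exp (Complex.I • (t₀ • H).map (fun x => (x : ℂ)))‖
      = ‖Complex.exp (Complex.I * (e : ℂ)) - 1‖ := by
    intro e
    rw [main e, norm_smul, hnormPc, mul_one, norm_mul, habs2, mul_one]
  refine ⟨hnorm ε, ?_, ?_⟩
  · rw [norm_smul, Real.norm_eq_abs, abs_of_pos hε,
      aux_norm_vecMulVec (𝕜 := ℝ) v (fun i => rfl) hv, mul_one]
  · -- the limit
    have hderiv : HasDerivAt (fun e : ℝ => Complex.exp (Complex.I * (e : ℂ))) Complex.I 0 := by
      have h1 : HasDerivAt (fun e : ℝ => ((e : ℂ))) 1 0 := Complex.ofRealCLM.hasDerivAt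
      have h2 : HasDerivAt (fun e : ℝ => Complex.I * (e : ℂ)) Complex.I 0 := by
        simpa using h1.const_mul Complex.I
      have h3 := h2.cexp
      simpa using h3
    rw [hasDerivAt_iff_tendsto_slope] at hderiv
    have hslope : Filter.Tendsto (fun e : ℝ => ‖slope (fun e : ℝ => Complex.exp (Complex.I * (e : ℂ))) 0 e‖)
        (nhdsWithin 0 (Set.Ioi 0)) (nhds 1) := by
      have := (continuous_norm.tendsto Complex.I).comp
        (hderiv.mono_left (nhdsWithin_mono 0 (fun x hx => by
          simp only [Set.mem_compl_iff, Set.mem_singleton_iff]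
          exact ne_of_gt hx)))
      rw [Complex.norm_I] at this
      exact this
    have hexp : Filter.Tendsto (fun e : ℝ => (Real.exp e)⁻¹)
        (nhdsWithin 0 (Set.Ioi 0)) (nhds 1) := by
      have : Filter.Tendsto (fun e : ℝ => (Real.exp e)⁻¹) (nhds 0) (nhds 1) := by
        have := (Real.continuous_exp.tendsto 0).inv₀ (by simp)
        simpa using this
      exact this.mono_left nhdsWithin_le_nhds
    have hmul := hslope.mul hexp
    rw [mul_one] at hmul
    apply hmul.congr'
    filter_upwards [self_mem_nhdsWithin] with e he
    have he0 : (0 : ℝ) < e := he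
    have hslope_eq : ‖slope (fun e : ℝ => Complex.exp (Complex.I * (e : ℂ))) 0 e‖
        = ‖Complex.exp (Complex.I * (e : ℂ)) - 1‖ / e := by
      rw [slope_def_module]
      rw [norm_smul]
      simp only [sub_zero, Complex.ofReal_zero, mul_zero, Complex.exp_zero]
      rw [Real.norm_eq_abs, abs_inv, abs_of_pos he0, div_eq_inv_mul]
    rw [hslope_eq, hnorm e]
    rw [div_mul_eq_div_div_swap]
    rw [div_div]
    ring_nf
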